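/- arXiv:math/0610466 — 3 statements merged into one kernel-verified Lean document; each statement's English description precedes it below -/
import Mathlib

section
/- There exists a universal constant C > 0 such that for every ε ∈ (0, 1/2) and every integer m > 1, the hitting time τ satisfies E[ τ^2 ] ≤ C · ε^{-3}. -/
open MeasureTheory Finset Filter ProbabilityTheory
open scoped ENNReal

/-- The binomial distribution with parameters `m` and `p`, as a measure on `ℕ`. -/
noncomputable def binomialMeasure (m : ℕ) (p : ℝ) : Measure ℕ :=
  ∑ k ∈ Finset.range (m + 1),
    ENNReal.ofReal (m.choose k * p ^ k * (1 - p) ^ (m - k)) • Measure.dirac k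

/-- The walk `W_t = 1 + ∑_{j=1}^t (β_j - 1)` driven by the increments `β`. -/
def walkW {Ω : Type*} (β : ℕ → Ω → ℕ) (t : ℕ) (ω : Ω) : ℤ :=
  1 + ∑ j ∈ Finset.range t, ((β j ω : ℤ) - 1)

/-- The hitting time of `0` by the walk, `τ = min {t ≥ 1 : W_t = 0}`, as a value in `ℝ≥0∞`
(equal to `∞` if the walk never hits `0`). -/
noncomputable def hitTime {Ω : Type*} (β : ℕ → Ω → ℕ) (ω : Ω) : ℝ≥0∞ :=
  sInf ((fun t : ℕ => (t : ℝ≥0∞)) '' {t | 1 ≤ t ∧ walkW β t ω = 0})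

namespace NP

variable {Ω : Type*}

/-- `TT β n ω = min (τ ω) n`, the stopped time. -/
def TT (β : ℕ → Ω → ℕ) : ℕ → Ω → ℕ
  | 0, _ => 0
  | n+1, ω => if 1 ≤ TT β n ω ∧ walkW β (TT β n ω) ω = 0 then TT β n ω else n + 1

/-- the walk has stopped by time `n`. -/
def stopped (β : ℕ → Ω → ℕ) (n : ℕ) (ω : Ω) : Prop :=
  1 ≤ TT β n ω ∧ walkW β (TT β n ω) ω = 0

instance (β : ℕ → Ω → ℕ) (n : ℕ) (ω : Ω) : Decidable (stopped β n ω) :=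
  instDecidableAnd

variable {β : ℕ → Ω → ℕ} {n t : ℕ} {ω : Ω}

lemma TT_succ (β : ℕ → Ω → ℕ) (n : ℕ) (ω : Ω) :
    TT β (n+1) ω = if stopped β n ω then TT β n ω else n + 1 := rfl

lemma TT_le : ∀ n, TT β n ω ≤ n
  | 0 => le_refl 0
  | n+1 => by
      rw [TT_succ]
      split
      · exact (TT_le n).trans (Nat.le_succ n)
      · exact le_refl _

lemma stopped_succ (h : stopped β n ω) : stopped β (n+1) ω := by
  have hT : TT β (n+1) ω = TT β n ω := by rw [TT_succ, if_pos h]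
  unfold stopped
  rw [hT]; exact h

lemma TT_succ_of_stopped (h : stopped β n ω) : TT β (n+1) ω = TT β n ω := by
  rw [TT_succ, if_pos h]

lemma TT_succ_of_not_stopped (h : ¬ stopped β n ω) : TT β (n+1) ω = n + 1 := by
  rw [TT_succ, if_neg h]

lemma TT_eq_of_not_stopped : ∀ {n}, ¬ stopped β n ω → TT β n ω = n
  | 0, _ => rfl
  | n+1, h => TT_succ_of_not_stopped (fun hs => h (stopped_succ hs))

lemma TT_mono : TT β n ω ≤ TT β (n+1) ω := by
  by_cases h : stopped β n ω
  · rw [TT_succ_of_stopped h]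
  · rw [TT_succ_of_not_stopped h, TT_eq_of_not_stopped h]; exact Nat.le_succ n

lemma stopped_of_hit : ∀ {n}, 1 ≤ t → t ≤ n → walkW β t ω = 0 → stopped β n ω := by
  intro n
  induction n with
  | zero => intro h1 h2 _; omega
  | succ n ih =>
    intro h1 h2 hw
    rcases Nat.lt_or_ge t (n+1) with h | h
    · exact stopped_succ (ih h1 (by omega) hw)
    · have ht : t = n + 1 := by omega
      by_cases hs : stopped β n ω
      · exact stopped_succ hs
      · have hT := TT_succ_of_not_stopped (β := β) (ω := ω) hs
        refine ⟨by omega, ?_⟩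
        rw [hT, ← ht]; exact hw

lemma not_stopped_iff : ¬ stopped β n ω ↔ ∀ t, 1 ≤ t → t ≤ n → walkW β t ω ≠ 0 := by
  constructor
  · intro h t h1 h2 hw; exact h (stopped_of_hit h1 h2 hw)
  · intro h hs
    exact h _ hs.1 ((TT_le _)) hs.2

/-- positivity of the walk before stopping. -/
lemma walk_pos : ∀ {n}, (∀ t, 1 ≤ t → t ≤ n → walkW β t ω ≠ 0) → 1 ≤ walkW β n ω := by
  intro n
  induction n with
  | zero => intro _; simp [walkW]
  | succ n ih =>
    intro h
    have h1 : 1 ≤ walkW β n ω := ih (fun t a b => h t a (by omega))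
    have h2 : walkW β n ω - 1 ≤ walkW β (n+1) ω := by
      unfold walkW
      rw [Finset.sum_range_succ]
      have : (0:ℤ) ≤ (β n ω : ℤ) := Int.natCast_nonneg _
      omega
    have h3 : walkW β (n+1) ω ≠ 0 := h (n+1) (by omega) le_rfl
    omega

lemma stopped_walk_nonneg : 0 ≤ walkW β (TT β n ω) ω := by
  by_cases h : stopped β n ω
  · rw [h.2]
  · rw [TT_eq_of_not_stopped h]
    have := walk_pos (not_stopped_iff.mp h)
    omega

/-- key pointwise bound for the final monotone-convergence step. -/
lemma hitTime_sq_le (β : ℕ → Ω → ℕ) (ω : Ω) :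
    (hitTime β ω) ^ 2 ≤ ⨆ n, ((TT β n ω : ℝ≥0∞)) ^ 2 := by
  by_cases h : ∃ t, 1 ≤ t ∧ walkW β t ω = 0
  · have ht₀ := Nat.find_spec h
    set t₀ := Nat.find h with ht₀def
    have h1 : hitTime β ω ≤ (t₀ : ℝ≥0∞) := sInf_le ⟨t₀, ht₀, rfl⟩
    have hns : ¬ stopped β (t₀ - 1) ω := by
      rw [not_stopped_iff]
      intro s hs1 hs2 hw
      have := Nat.find_min' h ⟨hs1, hw⟩
      omega
    have h2 : TT β t₀ ω = t₀ := by
      have h3 := TT_succ_of_not_stopped hns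
      have h4 : t₀ - 1 + 1 = t₀ := by omega
      rwa [h4] at h3
    calc (hitTime β ω) ^ 2 ≤ ((t₀ : ℝ≥0∞)) ^ 2 := pow_le_pow_left' h1 2
      _ = ((TT β t₀ ω : ℝ≥0∞)) ^ 2 := by rw [h2]
      _ ≤ ⨆ n, ((TT β n ω : ℝ≥0∞)) ^ 2 := le_iSup (fun n => ((TT β n ω : ℝ≥0∞)) ^ 2) t₀
  · have hh : hitTime β ω = ⊤ := by
      unfold hitTime
      have : {t | 1 ≤ t ∧ walkW β t ω = 0} = ∅ := by
        ext t; simp only [Set.mem_setOf_eq, Set.mem_empty_iff_false, iff_false]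
        exact fun hc => h ⟨t, hc⟩
      rw [this]; simp
    rw [hh]
    have hTT : ∀ n, TT β n ω = n := by
      intro n
      apply TT_eq_of_not_stopped
      rw [not_stopped_iff]
      intro s hs1 hs2 hw
      exact h ⟨s, hs1, hw⟩
    simp only [hTT]
    have : (⊤:ℝ≥0∞) ≤ ⨆ n : ℕ, (n : ℝ≥0∞)^2 := by
      rw [top_le_iff, iSup_eq_top]
      intro b hb
      obtain ⟨n, hn⟩ := ENNReal.exists_nat_gt hb.ne
      refine ⟨n+1, lt_of_lt_of_le hn ?_⟩
      calc (n:ℝ≥0∞) ≤ ((n+1:ℕ):ℝ≥0∞) := by exact_mod_cast Nat.cast_le.mpr (Nat.le_succ n)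
        _ ≤ ((n+1:ℕ):ℝ≥0∞)^2 := le_self_pow₀ (by exact_mod_cast Nat.succ_le_succ (Nat.zero_le n)) (by norm_num)
    calc (⊤:ℝ≥0∞)^2 = ⊤ := by simp
      _ ≤ ⨆ n : ℕ, (n : ℝ≥0∞)^2 := this

/-- The stopped process `XX = W_{τ ∧ n} + ε (τ ∧ n)`. -/
noncomputable def XX (ε : ℝ) (β : ℕ → Ω → ℕ) (n : ℕ) (ω : Ω) : ℝ :=
  ((walkW β (TT β n ω) ω : ℤ) : ℝ) + ε * (TT β n ω : ℝ)

/-- Indicator of the event that the walk has not stopped by time `n`. -/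
def II (β : ℕ → Ω → ℕ) (n : ℕ) (ω : Ω) : ℝ :=
  if stopped β n ω then 0 else 1

section congrs
variable {Ω' : Type*} {β : ℕ → Ω → ℕ} {β' : ℕ → Ω' → ℕ} {ω : Ω} {ω' : Ω'} {n : ℕ}

lemma walkW_congr (h : ∀ i < n, β i ω = β' i ω') {t : ℕ} (ht : t ≤ n) :
    walkW β t ω = walkW β' t ω' := by
  unfold walkW
  congr 1
  refine Finset.sum_congr rfl (fun j hj => ?_)
  rw [h j (lt_of_lt_of_le (Finset.mem_range.mp hj) ht)]

lemma TT_congr (h : ∀ i < n, β i ω = β' i ω') : ∀ t, t ≤ n → TT β t ω = TT β' t ω' := by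
  intro t
  induction t with
  | zero => intro _; rfl
  | succ t ih =>
    intro ht
    have h1 := ih (by omega)
    have h2 : walkW β (TT β t ω) ω = walkW β' (TT β' t ω') ω' := by
      rw [← h1]; exact walkW_congr h (le_trans (TT_le t) (by omega))
    have h3 : stopped β t ω ↔ stopped β' t ω' := by unfold stopped; rw [h2, h1]
    rw [TT_succ, TT_succ]
    exact if_congr h3 h1 rfl

lemma stopped_congr (h : ∀ i < n, β i ω = β' i ω') {t : ℕ} (ht : t ≤ n) :
    stopped β t ω ↔ stopped β' t ω' := by
  unfold stopped
  have h1 := TT_congr h t ht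
  have h2 : walkW β (TT β t ω) ω = walkW β' (TT β' t ω') ω' := by
    rw [← h1]; exact walkW_congr h (le_trans (TT_le t) ht)
  rw [h2, h1]
end congrs

section factor
variable (β : ℕ → Ω → ℕ) (n : ℕ)

/-- projection onto the first `n` coordinates. -/
def pr (ω : Ω) : (↥(Finset.range n) → ℕ) := fun i => β i ω

/-- lift of a finite vector to a full increment sequence. -/
def Lβ : ℕ → (↥(Finset.range n) → ℕ) → ℕ :=
  fun i v => if h : i ∈ Finset.range n then v ⟨i, h⟩ else 0

variable {β n}

lemma agree (ω : Ω) : ∀ i < n, β i ω = Lβ n i (pr β n ω) := by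
  intro i hi
  simp [Lβ, pr, Finset.mem_range, hi]

lemma TT_fac (ω : Ω) : TT β n ω = TT (Lβ n) n (pr β n ω) :=
  TT_congr (agree ω) n le_rfl

lemma stopped_fac (ω : Ω) : stopped β n ω ↔ stopped (Lβ n) n (pr β n ω) :=
  stopped_congr (agree ω) le_rfl

lemma II_fac (ω : Ω) : II β n ω = II (Lβ n) n (pr β n ω) := by
  unfold II
  by_cases h : stopped β n ω
  · rw [if_pos h, if_pos ((stopped_fac ω).mp h)]
  · rw [if_neg h, if_neg (fun hc => h ((stopped_fac ω).mpr hc))]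

lemma XX_fac (ε : ℝ) (ω : Ω) : XX ε β n ω = XX ε (Lβ n) n (pr β n ω) := by
  unfold XX
  have h1 := TT_fac (β := β) (n := n) ω
  have h2 : walkW β (TT β n ω) ω = walkW (Lβ n) (TT (Lβ n) n (pr β n ω)) (pr β n ω) := by
    rw [← h1]; exact walkW_congr (agree ω) (TT_le n)
  rw [h2, h1]

section meas
variable [MeasurableSpace Ω] (hb : ∀ j, Measurable (β j))
include hb

lemma meas_pr : Measurable (pr β n) :=
  measurable_pi_lambda _ (fun i => hb i)

lemma meas_XX (ε : ℝ) : Measurable (XX ε β n) := by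
  have : XX ε β n = (fun v => XX ε (Lβ n) n v) ∘ (pr β n) := funext (fun ω => XX_fac ε ω)
  rw [this]
  exact (measurable_of_countable _).comp (meas_pr hb)

lemma meas_II : Measurable (II β n) := by
  have : II β n = (fun v => II (Lβ n) n v) ∘ (pr β n) := funext (fun ω => II_fac ω)
  rw [this]
  exact (measurable_of_countable _).comp (meas_pr hb)

lemma meas_TTr : Measurable (fun ω => (TT β n ω : ℝ)) := by
  have : (fun ω => (TT β n ω : ℝ)) = (fun v => (TT (Lβ n) n v : ℝ)) ∘ (pr β n) :=
    funext (fun ω => by simp only [Function.comp, TT_fac ω])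
  rw [this]
  exact (measurable_of_countable _).comp (meas_pr hb)

end meas

section indep
variable [MeasurableSpace Ω] {μ : Measure Ω}

lemma indep_pr (hind : iIndepFun β μ) (hb : ∀ j, Measurable (β j))
    (F : (↥(Finset.range n) → ℕ) → ℝ) (g : ℕ → ℝ) :
    IndepFun (fun ω => F (pr β n ω)) (fun ω => g (β n ω)) μ := by
  have h := hind.indepFun_finset (Finset.range n) {n}
    (by simp [Finset.disjoint_singleton_right]) hb
  have h2 := h.comp (_mγ' := inferInstance) (φ := F)
    (ψ := fun w : (↥({n} : Finset ℕ) → ℕ) => g (w ⟨n, Finset.mem_singleton_self n⟩))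
    (measurable_of_countable F)
    (measurable_from_nat.comp (measurable_pi_apply _))
  exact h2

end indep
end factor
/-- binomial weight -/
noncomputable def w (m : ℕ) (p : ℝ) (k : ℕ) : ℝ := (m.choose k : ℝ) * p ^ k * (1 - p) ^ (m - k)

lemma w_nonneg {m : ℕ} {p : ℝ} (hp : 0 ≤ p) (hp1 : p ≤ 1) (k : ℕ) : 0 ≤ w m p k := by
  unfold w
  have h1 : (0:ℝ) ≤ 1 - p := by linarith
  positivity

lemma binomial_integral (m : ℕ) {p : ℝ} (hp : 0 ≤ p) (hp1 : p ≤ 1) (g : ℕ → ℝ) :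
    ∫ k, g k ∂(binomialMeasure m p) = ∑ k ∈ Finset.range (m+1), w m p k * g k := by
  unfold binomialMeasure
  rw [MeasureTheory.integral_finset_sum_measure]
  · refine Finset.sum_congr rfl (fun k _ => ?_)
    rw [integral_smul_measure, integral_dirac]
    have h := w_nonneg (m := m) hp hp1 k
    unfold w at h ⊢
    rw [ENNReal.toReal_ofReal h]
    rfl
  · intro k _
    refine (Integrable.smul_measure ?_ ENNReal.ofReal_ne_top)
    exact (integrable_const (g k)).congr (ae_eq_dirac g).symm

/-- basic binomial identity: sum of weights is `(p + (1-p))^m = 1`. -/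
lemma sum_w (m : ℕ) (x y : ℝ) :
    ∑ k ∈ Finset.range (m+1), (m.choose k : ℝ) * x ^ k * y ^ (m - k) = (x + y) ^ m := by
  rw [add_pow]
  refine Finset.sum_congr rfl (fun k _ => by ring)

lemma sum_w_one {m : ℕ} {p : ℝ} : ∑ k ∈ Finset.range (m+1), w m p k = 1 := by
  unfold w
  rw [sum_w]
  norm_num

lemma sumA (M : ℕ) (x y : ℝ) :
    ∑ k ∈ Finset.range (M+2), (k : ℝ) * ((M+1).choose k : ℝ) * x ^ k * y ^ ((M+1) - k)
      = (M+1 : ℝ) * x * ∑ j ∈ Finset.range (M+1), ((M.choose j : ℝ)) * x ^ j * y ^ (M - j) := by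
  rw [Finset.sum_range_succ']
  simp only [Nat.cast_zero, zero_mul, mul_zero, add_zero, zero_add]
  rw [Finset.mul_sum]
  refine Finset.sum_congr rfl (fun j hj => ?_)
  have hc : ((M+1) : ℕ) * (M.choose j) = (M+1).choose (j+1) * (j+1) := by
    have := Nat.add_one_mul_choose_eq M j
    simpa [Nat.succ_eq_add_one] using this
  have hcR : ((M:ℝ)+1) * (M.choose j : ℝ) = ((M+1).choose (j+1) : ℝ) * ((j:ℝ)+1) := by
    exact_mod_cast congrArg (Nat.cast : ℕ → ℝ) hc
  have he : (M+1) - (j+1) = M - j := by omega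
  rw [he]
  push_cast
  rw [pow_succ, show ((j:ℝ)+1) * (((M+1).choose (j+1)):ℝ) = ((M:ℝ)+1) * ((M.choose j):ℝ) from by linarith [hcR]]
  ring

lemma sumB (M : ℕ) (x y : ℝ) :
    ∑ k ∈ Finset.range (M+3), (k:ℝ) * ((k:ℝ) - 1) * (((M+2).choose k) : ℝ) * x ^ k * y ^ ((M+2) - k)
      = ((M:ℝ)+2) * ((M:ℝ)+1) * x^2 * ∑ j ∈ Finset.range (M+1), ((M.choose j : ℝ)) * x ^ j * y ^ (M - j) := by
  rw [Finset.sum_range_succ']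
  simp only [Nat.cast_zero, zero_mul, mul_zero, add_zero, zero_add, sub_zero]
  have step1 : ∑ l ∈ Finset.range (M+2), ((l+1 : ℕ):ℝ) * (((l+1 : ℕ):ℝ) - 1) * (((M+2).choose (l+1)) : ℝ) * x ^ (l+1) * y ^ ((M+2) - (l+1))
      = ((M:ℝ)+2) * x * ∑ l ∈ Finset.range (M+2), (l : ℝ) * (((M+1).choose l) : ℝ) * x ^ l * y ^ ((M+1) - l) := by
    rw [Finset.mul_sum]
    refine Finset.sum_congr rfl (fun l hl => ?_)
    have hc : ((M+2) : ℕ) * ((M+1).choose l) = (M+2).choose (l+1) * (l+1) := by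
      have := Nat.add_one_mul_choose_eq (M+1) l
      simpa [Nat.succ_eq_add_one] using this
    have hcR : ((M:ℝ)+2) * (((M+1).choose l) : ℝ) = (((M+2).choose (l+1)) : ℝ) * ((l:ℝ)+1) := by
      exact_mod_cast congrArg (Nat.cast : ℕ → ℝ) hc
    have he : (M+2) - (l+1) = (M+1) - l := by omega
    rw [he]
    push_cast
    rw [pow_succ]
    have key : ((l:ℝ)+1) * (((M+2).choose (l+1)):ℝ) = ((M:ℝ)+2) * (((M+1).choose l):ℝ) := by
      linarith [hcR]
    linear_combination (((l:ℝ)+1-1) * (x^l * x) * y^(M+1-l)) * key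
  rw [step1, sumA M x y]
  ring

lemma sum_mean {m : ℕ} (hm : 1 ≤ m) (p : ℝ) :
    ∑ k ∈ Finset.range (m+1), (k:ℝ) * w m p k = m * p := by
  obtain ⟨M, rfl⟩ : ∃ M, m = M + 1 := ⟨m - 1, by omega⟩
  unfold w
  have h1 : ∑ k ∈ Finset.range (M+2), (k:ℝ) * ((((M+1)).choose k : ℝ) * p ^ k * (1-p) ^ ((M+1) - k))
      = ∑ k ∈ Finset.range (M+2), (k:ℝ) * (((M+1)).choose k : ℝ) * p ^ k * (1-p) ^ ((M+1) - k) :=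
    Finset.sum_congr rfl (fun k _ => by ring)
  rw [h1, sumA M p (1-p), sum_w]
  norm_num

lemma sum_desc {m : ℕ} (hm : 2 ≤ m) (p : ℝ) :
    ∑ k ∈ Finset.range (m+1), (k:ℝ) * ((k:ℝ) - 1) * w m p k = (m:ℝ) * ((m:ℝ)-1) * p^2 := by
  obtain ⟨M, rfl⟩ : ∃ M, m = M + 2 := ⟨m - 2, by omega⟩
  unfold w
  have h1 : ∑ k ∈ Finset.range (M+3), (k:ℝ) * ((k:ℝ)-1) * ((((M+2)).choose k : ℝ) * p ^ k * (1-p) ^ ((M+2) - k))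
      = ∑ k ∈ Finset.range (M+3), (k:ℝ) * ((k:ℝ)-1) * (((M+2)).choose k : ℝ) * p ^ k * (1-p) ^ ((M+2) - k) :=
    Finset.sum_congr rfl (fun k _ => by ring)
  rw [h1, sumB M p (1-p), sum_w, show p + (1-p) = 1 by ring, one_pow]
  push_cast
  ring

lemma integral_center {m : ℕ} (hm : 2 ≤ m) {p : ℝ} (hp : 0 ≤ p) (hp1 : p ≤ 1) :
    ∫ k, ((k:ℝ) - (m:ℝ)*p) ∂(binomialMeasure m p) = 0 := by
  rw [binomial_integral m hp hp1]
  have expand : ∀ k : ℕ, w m p k * ((k:ℝ) - (m:ℝ)*p)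
      = (k:ℝ) * w m p k - ((m:ℝ)*p) * w m p k := fun k => by ring
  simp_rw [expand]
  rw [Finset.sum_sub_distrib, ← Finset.mul_sum, sum_mean (by omega) p, sum_w_one]
  ring

lemma integral_center_sq {m : ℕ} (hm : 2 ≤ m) {p : ℝ} (hp : 0 ≤ p) (hp1 : p ≤ 1) :
    ∫ k, ((k:ℝ) - (m:ℝ)*p)^2 ∂(binomialMeasure m p) = (m:ℝ)*p*(1-p) := by
  rw [binomial_integral m hp hp1]
  have expand : ∀ k : ℕ, w m p k * ((k:ℝ) - (m:ℝ)*p)^2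
      = (k:ℝ)*((k:ℝ)-1) * w m p k + (1 - 2*((m:ℝ)*p)) * ((k:ℝ) * w m p k)
        + ((m:ℝ)*p)^2 * w m p k := fun k => by ring
  simp_rw [expand]
  rw [Finset.sum_add_distrib, Finset.sum_add_distrib, ← Finset.mul_sum, ← Finset.mul_sum,
    sum_mean (by omega) p, sum_desc hm p, sum_w_one]
  ring


section mart
variable {β : ℕ → Ω → ℕ} {n : ℕ} {ω : Ω} {ε : ℝ}

lemma XX_zero : XX ε β 0 ω = 1 := by
  unfold XX TT walkW
  simp

lemma XX_succ : XX ε β (n+1) ω = XX ε β n ω + II β n ω * (((β n ω : ℕ):ℝ) - (1 - ε)) := by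
  by_cases h : stopped β n ω
  · unfold XX
    rw [TT_succ_of_stopped h]
    simp [II, h]
  · have h1 : TT β n ω = n := TT_eq_of_not_stopped h
    have h2 : TT β (n+1) ω = n+1 := TT_succ_of_not_stopped h
    unfold XX II
    rw [h1, h2, if_neg h]
    have hw : walkW β (n+1) ω = walkW β n ω + ((β n ω : ℤ) - 1) := by
      unfold walkW
      rw [Finset.sum_range_succ]
      ring
    rw [hw]
    push_cast
    ring

lemma TTr_succ : (TT β (n+1) ω : ℝ) = (TT β n ω : ℝ) + II β n ω := by
  by_cases h : stopped β n ω
  · rw [TT_succ_of_stopped h]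
    simp [II, h]
  · rw [TT_succ_of_not_stopped h, TT_eq_of_not_stopped h]
    simp [II, h]

lemma XX_sq_succ :
    XX ε β (n+1) ω ^ 2 = XX ε β n ω ^ 2
      + 2 * (XX ε β n ω * II β n ω) * (((β n ω : ℕ):ℝ) - (1 - ε))
      + II β n ω * (((β n ω : ℕ):ℝ) - (1 - ε)) ^ 2 := by
  rw [XX_succ]
  by_cases h : stopped β n ω <;> simp [II, h] <;> ring

lemma walk_abs_le {m : ℕ} (hβ : ∀ j < n, β j ω ≤ m) :
    ∀ t ≤ n, |walkW β t ω| ≤ 1 + (n:ℤ) * (m+1) := by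
  intro t ht
  unfold walkW
  calc |1 + ∑ j ∈ Finset.range t, ((β j ω : ℤ) - 1)|
      ≤ |(1:ℤ)| + |∑ j ∈ Finset.range t, ((β j ω : ℤ) - 1)| := abs_add_le _ _
    _ ≤ 1 + (n:ℤ) * (m+1) := by
        rw [abs_one]
        gcongr
        calc |∑ j ∈ Finset.range t, ((β j ω : ℤ) - 1)|
            ≤ ∑ j ∈ Finset.range t, |((β j ω : ℤ) - 1)| := Finset.abs_sum_le_sum_abs _ _
          _ ≤ ∑ _j ∈ Finset.range t, ((m:ℤ)+1) := by
              refine Finset.sum_le_sum (fun j hj => ?_)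
              have hj' := hβ j (lt_of_lt_of_le (Finset.mem_range.mp hj) ht)
              have h0 : (0:ℤ) ≤ (β j ω : ℤ) := Int.natCast_nonneg _
              have hb : (β j ω : ℤ) ≤ m := by exact_mod_cast hj'
              rw [abs_le]
              omega
          _ ≤ (n:ℤ) * (m+1) := by
              rw [Finset.sum_const, Finset.card_range, nsmul_eq_mul]
              have : (t:ℤ) ≤ n := by exact_mod_cast ht
              nlinarith [Int.natCast_nonneg m]

lemma meas_S [MeasurableSpace Ω] (hb : ∀ j, Measurable (β j)) :
    Measurable (fun ω => ((walkW β (TT β n ω) ω : ℤ) : ℝ)) := by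
  have hfac : ∀ ω : Ω, ((walkW β (TT β n ω) ω : ℤ) : ℝ)
      = ((walkW (Lβ n) (TT (Lβ n) n (pr β n ω)) (pr β n ω) : ℤ) : ℝ) := by
    intro ω
    have h1 := TT_fac (β := β) (n := n) ω
    have h2 : walkW β (TT β n ω) ω = walkW (Lβ n) (TT (Lβ n) n (pr β n ω)) (pr β n ω) := by
      rw [← h1]; exact walkW_congr (agree ω) (TT_le n)
    rw [h2]
  have : (fun ω => ((walkW β (TT β n ω) ω : ℤ) : ℝ))
      = (fun v => ((walkW (Lβ n) (TT (Lβ n) n v) v : ℤ) : ℝ)) ∘ (pr β n) := funext hfac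
  rw [this]
  exact (measurable_of_countable _).comp (meas_pr hb)

lemma meas_TTe [MeasurableSpace Ω] (hb : ∀ j, Measurable (β j)) :
    Measurable (fun ω => ((TT β n ω : ℕ) : ℝ≥0∞)) := by
  have : (fun ω => ((TT β n ω : ℕ) : ℝ≥0∞))
      = (fun v => ((TT (Lβ n) n v : ℕ) : ℝ≥0∞)) ∘ (pr β n) :=
    funext (fun ω => by simp only [Function.comp]; rw [TT_fac ω])
  rw [this]
  exact (measurable_of_countable _).comp (meas_pr hb)

end mart

end NP

set_option maxHeartbeats 2000000 in
/-- **Lemma 4 of Nachmias–Peres, second moment.**  Let `W` be the random walk started at `1`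
with i.i.d. `Bin(m, (1-ε)/m)`-distributed increments shifted by `-1`, and let `τ` be its hitting
time of `0`.  There is a universal constant `C > 0` such that for every `ε ∈ (0,1/2)` and every
integer `m > 1`, `E[τ²] ≤ C ε⁻³`. -/
theorem hitting_time_second_moment :
    ∃ C : ℝ, 0 < C ∧
      ∀ (ε : ℝ), ε ∈ Set.Ioo (0 : ℝ) (1 / 2) → ∀ (m : ℕ), 1 < m →
      ∀ (Ω : Type) (_ : MeasurableSpace Ω) (μ : Measure Ω), IsProbabilityMeasure μ →
      ∀ (β : ℕ → Ω → ℕ), (∀ j, Measurable (β j)) →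
      iIndepFun β μ →
      (∀ j, μ.map (β j) = binomialMeasure m ((1 - ε) / m)) →
        ∫⁻ ω, (hitTime β ω) ^ 2 ∂μ ≤ ENNReal.ofReal (C * (ε ^ 3)⁻¹) := by
  refine ⟨2, by norm_num, ?_⟩
  rintro ε ⟨hε0, hε2⟩ m hm Ω mΩ μ hμ β hb hind hmap
  have hm2 : (2:ℝ) ≤ (m:ℝ) := by exact_mod_cast hm
  have hε1 : ε < 1 := by linarith
  set p : ℝ := (1 - ε) / m with hp_def
  have hmR : (0:ℝ) < m := by linarith
  have hp0 : 0 ≤ p := div_nonneg (by linarith) hmR.le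
  have hmp : (m:ℝ) * p = 1 - ε := by
    rw [hp_def]; field_simp
  have hp1 : p ≤ 1 := by
    rw [hp_def, div_le_one hmR]; linarith
  set s2 : ℝ := (m:ℝ) * p * (1 - p) with hs2_def
  have hσ0 : 0 ≤ s2 := by
    have : 1 - p ≥ 0 := by linarith
    have := mul_nonneg (mul_nonneg hmR.le hp0) this
    linarith [this]
  have hσ1 : s2 ≤ 1 := by
    rw [hs2_def, hmp]
    nlinarith [hp0, hp1, hε0, hε1]
  -- transfer of integrals to the binomial measure
  have hg : ∀ (j : ℕ) (g : ℕ → ℝ), ∫ ω, g (β j ω) ∂μ = ∫ k, g k ∂(binomialMeasure m p) := by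
    intro j g
    rw [← integral_map (hb j).aemeasurable measurable_from_nat.aestronglyMeasurable, hmap j]
  have hEΔ : ∀ n, ∫ ω, ((β n ω : ℝ) - (1 - ε)) ∂μ = 0 := by
    intro n
    rw [hg n (fun k => (k:ℝ) - (1 - ε)), ← hmp]
    exact NP.integral_center (by omega) hp0 hp1
  have hEΔ2 : ∀ n, ∫ ω, ((β n ω : ℝ) - (1 - ε))^2 ∂μ = s2 := by
    intro n
    rw [hg n (fun k => ((k:ℝ) - (1 - ε))^2), ← hmp]
    exact NP.integral_center_sq (by omega) hp0 hp1
  -- a.e. boundedness of the increments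
  have hβae : ∀ j, ∀ᵐ ω ∂μ, β j ω ≤ m := by
    intro j
    have hset : MeasurableSet {k : ℕ | m < k} := .of_discrete
    have h1 : μ.map (β j) {k : ℕ | m < k} = 0 := by
      rw [hmap j]
      unfold binomialMeasure
      rw [Measure.finset_sum_apply]
      refine Finset.sum_eq_zero (fun k hk => ?_)
      rw [Measure.smul_apply, Measure.dirac_apply' _ hset]
      have hk' : k ∉ {k : ℕ | m < k} := by
        simp only [Set.mem_setOf_eq, not_lt]
        have := Finset.mem_range.mp hk
        omega
      rw [Set.indicator_of_notMem hk']
      simp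
    rw [Measure.map_apply (hb j) hset] at h1
    rw [ae_iff]
    have hseteq : {ω | ¬ β j ω ≤ m} = β j ⁻¹' {k : ℕ | m < k} := by
      ext ω; simp [not_le]
    rw [hseteq]
    exact h1
  have hball : ∀ n : ℕ, ∀ᵐ ω ∂μ, ∀ j, j < n → β j ω ≤ m := by
    intro n
    rw [ae_all_iff]
    intro j
    by_cases h : j < n
    · filter_upwards [hβae j] with ω h1 _
      exact h1
    · filter_upwards with ω h2
      omega
  -- integrability helper
  have intHelp : ∀ (f : Ω → ℝ) (C : ℝ), Measurable f → (∀ᵐ ω ∂μ, |f ω| ≤ C) → Integrable f μ := by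
    intro f C hf h
    exact (integrable_const C).mono' hf.aestronglyMeasurable (by simpa [Real.norm_eq_abs] using h)
  -- a.e. bounds on stopped quantities
  have hSb : ∀ n, ∀ᵐ ω ∂μ, |((walkW β (NP.TT β n ω) ω : ℤ):ℝ)| ≤ 1 + (n:ℝ)*((m:ℝ)+1) := by
    intro n
    filter_upwards [hball n] with ω hω
    have h1 := NP.walk_abs_le (m := m) hω (NP.TT β n ω) (NP.TT_le n)
    have h2 : ((|walkW β (NP.TT β n ω) ω| : ℤ) : ℝ) ≤ ((1 + (n:ℤ)*((m:ℤ)+1) : ℤ) : ℝ) := by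
      exact_mod_cast h1
    rw [← Int.cast_abs]
    push_cast at h2 ⊢
    linarith
  have hXb : ∀ n, ∀ᵐ ω ∂μ, |NP.XX ε β n ω| ≤ 1 + (n:ℝ)*((m:ℝ)+1) + (n:ℝ) := by
    intro n
    filter_upwards [hSb n] with ω hω
    have hT0 : (0:ℝ) ≤ (NP.TT β n ω : ℝ) := Nat.cast_nonneg _
    have hT : (NP.TT β n ω : ℝ) ≤ (n:ℝ) := by exact_mod_cast NP.TT_le (β := β) (ω := ω) n
    have : |NP.XX ε β n ω| ≤ |((walkW β (NP.TT β n ω) ω : ℤ):ℝ)| + |ε * (NP.TT β n ω : ℝ)| := abs_add_le _ _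
    have h2 : |ε * (NP.TT β n ω : ℝ)| ≤ (n:ℝ) := by
      rw [abs_mul, abs_of_nonneg hε0.le, abs_of_nonneg hT0]
      nlinarith
    linarith
  -- integrable random variables
  have iS : ∀ n, Integrable (fun ω => ((walkW β (NP.TT β n ω) ω : ℤ):ℝ)) μ := fun n =>
    intHelp _ _ (NP.meas_S hb) (hSb n)
  have iT : ∀ n, Integrable (fun ω => (NP.TT β n ω : ℝ)) μ := fun n =>
    intHelp _ (n:ℝ) (NP.meas_TTr hb) (ae_of_all _ (fun ω => by
      rw [abs_of_nonneg (Nat.cast_nonneg _)]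
      exact_mod_cast NP.TT_le (β := β) (ω := ω) n))
  have iT2 : ∀ n, Integrable (fun ω => (NP.TT β n ω : ℝ)^2) μ := fun n =>
    intHelp _ ((n:ℝ)^2) ((NP.meas_TTr hb).pow_const 2) (ae_of_all _ (fun ω => by
      rw [abs_of_nonneg (sq_nonneg _)]
      have h1 : (NP.TT β n ω : ℝ) ≤ (n:ℝ) := by exact_mod_cast NP.TT_le (β := β) (ω := ω) n
      have h0 : (0:ℝ) ≤ (NP.TT β n ω : ℝ) := Nat.cast_nonneg _
      nlinarith))
  have iII : ∀ n, Integrable (NP.II β n) μ := fun n =>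
    intHelp _ 1 (NP.meas_II hb) (ae_of_all _ (fun ω => by
      unfold NP.II; split <;> norm_num))
  have iXX : ∀ n, Integrable (NP.XX ε β n) μ := fun n =>
    intHelp _ _ (NP.meas_XX hb ε) (hXb n)
  have iXX2 : ∀ n, Integrable (fun ω => NP.XX ε β n ω^2) μ := fun n =>
    intHelp _ ((1 + (n:ℝ)*((m:ℝ)+1) + (n:ℝ))^2) ((NP.meas_XX hb ε).pow_const 2)
      (by
        filter_upwards [hXb n] with ω hω
        rw [abs_pow]
        have h0 : (0:ℝ) ≤ |NP.XX ε β n ω| := abs_nonneg _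
        nlinarith)
  have iΔ : ∀ n, Integrable (fun ω => (β n ω : ℝ) - (1-ε)) μ := fun n =>
    intHelp _ ((m:ℝ)+1) ((measurable_from_nat.comp (hb n)).sub measurable_const) (by
      filter_upwards [hβae n] with ω hω
      have h1 : (β n ω : ℝ) ≤ (m:ℝ) := by exact_mod_cast hω
      have h0 : (0:ℝ) ≤ (β n ω : ℝ) := Nat.cast_nonneg _
      rw [abs_le]
      constructor <;> nlinarith)
  have iΔ2 : ∀ n, Integrable (fun ω => ((β n ω : ℝ) - (1-ε))^2) μ := fun n =>
    intHelp _ (((m:ℝ)+1)^2) (((measurable_from_nat.comp (hb n)).sub measurable_const).pow_const 2) (by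
      filter_upwards [hβae n] with ω hω
      have h1 : (β n ω : ℝ) ≤ (m:ℝ) := by exact_mod_cast hω
      have h0 : (0:ℝ) ≤ (β n ω : ℝ) := Nat.cast_nonneg _
      rw [abs_pow]
      have h2 : |(β n ω : ℝ) - (1-ε)| ≤ (m:ℝ)+1 := by
        rw [abs_le]; constructor <;> nlinarith
      nlinarith [abs_nonneg ((β n ω : ℝ) - (1-ε))])
  have iXXII : ∀ n, Integrable (fun ω => NP.XX ε β n ω * NP.II β n ω) μ := fun n =>
    intHelp _ (1 + (n:ℝ)*((m:ℝ)+1) + (n:ℝ)) ((NP.meas_XX hb ε).mul (NP.meas_II hb)) (by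
      filter_upwards [hXb n] with ω hω
      rw [abs_mul]
      have h2 : |NP.II β n ω| ≤ 1 := by unfold NP.II; split <;> norm_num
      have h0 : (0:ℝ) ≤ |NP.XX ε β n ω| := abs_nonneg _
      nlinarith)
  have iIIΔ : ∀ n, Integrable (fun ω => NP.II β n ω * ((β n ω : ℝ) - (1-ε))) μ := fun n =>
    intHelp _ ((m:ℝ)+1) ((NP.meas_II hb).mul ((measurable_from_nat.comp (hb n)).sub measurable_const)) (by
      filter_upwards [hβae n] with ω hω
      have h1 : (β n ω : ℝ) ≤ (m:ℝ) := by exact_mod_cast hω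
      have h0 : (0:ℝ) ≤ (β n ω : ℝ) := Nat.cast_nonneg _
      rw [abs_mul]
      have h2 : |NP.II β n ω| ≤ 1 := by unfold NP.II; split <;> norm_num
      have h3 : |(β n ω : ℝ) - (1-ε)| ≤ (m:ℝ)+1 := by
        rw [abs_le]; constructor <;> nlinarith
      nlinarith [abs_nonneg (NP.II β n ω), abs_nonneg ((β n ω : ℝ) - (1-ε))])
  have iIIΔ2 : ∀ n, Integrable (fun ω => NP.II β n ω * ((β n ω : ℝ) - (1-ε))^2) μ := fun n =>
    intHelp _ (((m:ℝ)+1)^2) ((NP.meas_II hb).mul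
        (((measurable_from_nat.comp (hb n)).sub measurable_const).pow_const 2)) (by
      filter_upwards [hβae n] with ω hω
      have h1 : (β n ω : ℝ) ≤ (m:ℝ) := by exact_mod_cast hω
      have h0 : (0:ℝ) ≤ (β n ω : ℝ) := Nat.cast_nonneg _
      rw [abs_mul, abs_pow]
      have h2 : |NP.II β n ω| ≤ 1 := by unfold NP.II; split <;> norm_num
      have h3 : |(β n ω : ℝ) - (1-ε)| ≤ (m:ℝ)+1 := by
        rw [abs_le]; constructor <;> nlinarith
      nlinarith [abs_nonneg (NP.II β n ω), abs_nonneg ((β n ω : ℝ) - (1-ε))])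
  have iXIΔ : ∀ n, Integrable (fun ω => 2 * (NP.XX ε β n ω * NP.II β n ω) * ((β n ω : ℝ) - (1-ε))) μ := fun n =>
    intHelp _ (2 * (1 + (n:ℝ)*((m:ℝ)+1) + (n:ℝ)) * ((m:ℝ)+1))
      ((((NP.meas_XX hb ε).mul (NP.meas_II hb)).const_mul 2).mul
        ((measurable_from_nat.comp (hb n)).sub measurable_const)) (by
      filter_upwards [hβae n, hXb n] with ω hω hXω
      have h1 : (β n ω : ℝ) ≤ (m:ℝ) := by exact_mod_cast hω
      have h0 : (0:ℝ) ≤ (β n ω : ℝ) := Nat.cast_nonneg _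
      rw [abs_mul, abs_mul, abs_mul]
      have h2 : |NP.II β n ω| ≤ 1 := by unfold NP.II; split <;> norm_num
      have h3 : |(β n ω : ℝ) - (1-ε)| ≤ (m:ℝ)+1 := by
        rw [abs_le]; constructor <;> nlinarith
      have h4 : |(2:ℝ)| = 2 := by norm_num
      rw [h4]
      calc 2 * (|NP.XX ε β n ω| * |NP.II β n ω|) * |(β n ω : ℝ) - (1-ε)|
          ≤ 2 * ((1 + (n:ℝ)*((m:ℝ)+1) + (n:ℝ)) * 1) * ((m:ℝ)+1) := by gcongr
        _ = 2 * (1 + (n:ℝ)*((m:ℝ)+1) + (n:ℝ)) * ((m:ℝ)+1) := by ring)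
  -- independence: a function of the first n increments times a function of the n-th
  have key : ∀ (n : ℕ) (X : Ω → ℝ) (F : (↥(Finset.range n) → ℕ) → ℝ),
      (∀ ω, X ω = F (NP.pr β n ω)) → ∀ (g : ℕ → ℝ), Integrable X μ →
      Integrable (fun ω => g (β n ω)) μ →
      ∫ ω, X ω * g (β n ω) ∂μ = (∫ ω, X ω ∂μ) * ∫ ω, g (β n ω) ∂μ := by
    intro n X F hXF g hX hg'
    have hXeq : X = fun ω => F (NP.pr β n ω) := funext hXF
    rw [hXeq] at hX ⊢
    exact (NP.indep_pr hind hb F g).integral_fun_mul_eq_mul_integral hX.aestronglyMeasurable hg'.aestronglyMeasurable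
  -- the three martingale computations
  have E1 : ∀ n, ∫ ω, NP.XX ε β n ω ∂μ = 1 := by
    intro n
    induction n with
    | zero =>
      simp only [NP.XX_zero]
      simp
    | succ n ih =>
      have hpt : ∫ ω, NP.XX ε β (n+1) ω ∂μ
          = ∫ ω, (NP.XX ε β n ω + NP.II β n ω * ((β n ω : ℝ) - (1-ε))) ∂μ :=
        integral_congr_ae (ae_of_all _ (fun ω => NP.XX_succ))
      have hmid : ∫ ω, NP.II β n ω * ((β n ω : ℝ) - (1-ε)) ∂μ
          = (∫ ω, NP.II β n ω ∂μ) * ∫ ω, ((β n ω : ℝ) - (1-ε)) ∂μ :=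
        key n (NP.II β n) (fun v => NP.II (NP.Lβ n) n v) (fun ω => NP.II_fac ω)
          (fun k => (k:ℝ) - (1-ε)) (iII n) (iΔ n)
      rw [hpt, integral_add (iXX n) (iIIΔ n), hmid, hEΔ n, ih]
      ring
  have E2 : ∀ n, ∫ ω, (NP.TT β (n+1) ω : ℝ) ∂μ
      = ∫ ω, (NP.TT β n ω : ℝ) ∂μ + ∫ ω, NP.II β n ω ∂μ := by
    intro n
    rw [← integral_add (iT n) (iII n)]
    exact integral_congr_ae (ae_of_all _ (fun ω => NP.TTr_succ))
  have hIIpos : ∀ n, 0 ≤ ∫ ω, NP.II β n ω ∂μ := fun n =>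
    integral_nonneg (fun ω => by unfold NP.II; split <;> norm_num)
  have E3 : ∀ n, ∫ ω, NP.XX ε β (n+1) ω^2 ∂μ
      = ∫ ω, NP.XX ε β n ω^2 ∂μ + s2 * ∫ ω, NP.II β n ω ∂μ := by
    intro n
    have hpt : ∫ ω, NP.XX ε β (n+1) ω^2 ∂μ
        = ∫ ω, (NP.XX ε β n ω^2 + 2 * (NP.XX ε β n ω * NP.II β n ω) * ((β n ω : ℝ) - (1-ε))
            + NP.II β n ω * ((β n ω : ℝ) - (1-ε))^2) ∂μ :=
      integral_congr_ae (ae_of_all _ (fun ω => NP.XX_sq_succ))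
    have hmidA : ∫ ω, (NP.XX ε β n ω * NP.II β n ω) * ((β n ω : ℝ) - (1-ε)) ∂μ
        = (∫ ω, NP.XX ε β n ω * NP.II β n ω ∂μ) * ∫ ω, ((β n ω : ℝ) - (1-ε)) ∂μ :=
      key n (fun ω => NP.XX ε β n ω * NP.II β n ω)
        (fun v => NP.XX ε (NP.Lβ n) n v * NP.II (NP.Lβ n) n v)
        (fun ω => congrArg₂ (· * ·) (NP.XX_fac ε ω) (NP.II_fac ω))
        (fun k => (k:ℝ) - (1-ε)) (iXXII n) (iΔ n)
    have hmidB : ∫ ω, NP.II β n ω * ((β n ω : ℝ) - (1-ε))^2 ∂μ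
        = (∫ ω, NP.II β n ω ∂μ) * ∫ ω, ((β n ω : ℝ) - (1-ε))^2 ∂μ :=
      key n (NP.II β n) (fun v => NP.II (NP.Lβ n) n v) (fun ω => NP.II_fac ω)
        (fun k => ((k:ℝ) - (1-ε))^2) (iII n) (iΔ2 n)
    have hassoc : ∫ ω, 2 * (NP.XX ε β n ω * NP.II β n ω) * ((β n ω : ℝ) - (1-ε)) ∂μ
        = 2 * ∫ ω, (NP.XX ε β n ω * NP.II β n ω) * ((β n ω : ℝ) - (1-ε)) ∂μ := by
      rw [← integral_const_mul]
      exact integral_congr_ae (ae_of_all _ (fun ω => by ring))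
    have iAB : Integrable (fun ω => NP.XX ε β n ω^2
        + 2 * (NP.XX ε β n ω * NP.II β n ω) * ((β n ω : ℝ) - (1-ε))) μ :=
      (iXX2 n).add (iXIΔ n)
    rw [hpt, integral_add iAB (iIIΔ2 n), integral_add (iXX2 n) (iXIΔ n),
      hassoc, hmidA, hmidB, hEΔ n, hEΔ2 n]
    ring
  have E4 : ∀ n, ∫ ω, NP.XX ε β n ω^2 ∂μ ≤ 1 + s2 * ∫ ω, (NP.TT β n ω : ℝ) ∂μ := by
    intro n
    induction n with
    | zero =>
      have h1 : ∫ ω, NP.XX ε β 0 ω^2 ∂μ = 1 := by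
        simp only [NP.XX_zero]
        simp
      have h2 : ∫ ω, (NP.TT β 0 ω : ℝ) ∂μ = 0 := by
        have : ∀ ω : Ω, (NP.TT β 0 ω : ℝ) = 0 := fun ω => by
          rw [show NP.TT β 0 ω = 0 from rfl]; norm_num
        simp only [this]
        simp
      rw [h1, h2]
      linarith
    | succ n ih =>
      rw [E3 n, E2 n]
      nlinarith [hIIpos n, hσ0, hσ1]
  have E5 : ∀ n, ε * ∫ ω, (NP.TT β n ω : ℝ) ∂μ ≤ 1 := by
    intro n
    have h1 : ∫ ω, NP.XX ε β n ω ∂μ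
        = ∫ ω, ((walkW β (NP.TT β n ω) ω : ℤ):ℝ) ∂μ + ε * ∫ ω, (NP.TT β n ω : ℝ) ∂μ := by
      rw [← integral_const_mul, ← integral_add (iS n) ((iT n).const_mul ε)]
      rfl
    have h2 : 0 ≤ ∫ ω, ((walkW β (NP.TT β n ω) ω : ℤ):ℝ) ∂μ :=
      integral_nonneg (fun ω => by
        show (0:ℝ) ≤ ((walkW β (NP.TT β n ω) ω : ℤ):ℝ)
        have := NP.stopped_walk_nonneg (β := β) (n := n) (ω := ω)
        exact_mod_cast this)
    have h3 := E1 n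
    linarith
  have hε3 : (0:ℝ) < ε^3 := by positivity
  have E6 : ∀ n, ∫ ω, (NP.TT β n ω : ℝ)^2 ∂μ ≤ 2 / ε^3 := by
    intro n
    have hTpos : 0 ≤ ∫ ω, (NP.TT β n ω : ℝ) ∂μ :=
      integral_nonneg (fun ω => Nat.cast_nonneg _)
    have h1 : ε^2 * ∫ ω, (NP.TT β n ω : ℝ)^2 ∂μ ≤ ∫ ω, NP.XX ε β n ω^2 ∂μ := by
      rw [← integral_const_mul]
      refine integral_mono ((iT2 n).const_mul _) (iXX2 n) (fun ω => ?_)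
      have hS : (0:ℝ) ≤ ((walkW β (NP.TT β n ω) ω : ℤ):ℝ) := by
        have := NP.stopped_walk_nonneg (β := β) (n := n) (ω := ω)
        exact_mod_cast this
      have hT : (0:ℝ) ≤ (NP.TT β n ω : ℝ) := Nat.cast_nonneg _
      have hXX : NP.XX ε β n ω = ((walkW β (NP.TT β n ω) ω : ℤ):ℝ) + ε * (NP.TT β n ω : ℝ) := rfl
      rw [hXX]
      nlinarith [mul_nonneg hε0.le hT, mul_nonneg hS (mul_nonneg hε0.le hT)]
    have h2 := E4 n
    have h3 := E5 n
    have h4 : s2 * ∫ ω, (NP.TT β n ω : ℝ) ∂μ ≤ ∫ ω, (NP.TT β n ω : ℝ) ∂μ := by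
      nlinarith
    have h5 : ∫ ω, (NP.TT β n ω : ℝ) ∂μ ≤ 1/ε := by
      rw [le_div_iff₀ hε0]
      linarith
    have h6 : ε^2 * ∫ ω, (NP.TT β n ω : ℝ)^2 ∂μ ≤ 1 + 1/ε := by
      linarith
    rw [le_div_iff₀ hε3]
    have h7 : ε * (1 + 1/ε) = ε + 1 := by field_simp
    have h8 := mul_le_mul_of_nonneg_left h6 hε0.le
    rw [h7] at h8
    have h9 : ε * (ε^2 * ∫ ω, (NP.TT β n ω : ℝ)^2 ∂μ)
        = (∫ ω, (NP.TT β n ω : ℝ)^2 ∂μ) * ε^3 := by ring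
    rw [h9] at h8
    linarith
  -- final monotone-convergence step
  have hmono : Monotone (fun n : ℕ => fun ω => ((NP.TT β n ω : ℕ) : ℝ≥0∞)^2) := by
    refine monotone_nat_of_le_succ (fun n ω => ?_)
    have h1 : NP.TT β n ω ≤ NP.TT β (n+1) ω := NP.TT_mono
    exact pow_le_pow_left' (by exact_mod_cast h1) 2
  calc ∫⁻ ω, hitTime β ω ^ 2 ∂μ
      ≤ ∫⁻ ω, ⨆ n, ((NP.TT β n ω : ℕ) : ℝ≥0∞)^2 ∂μ :=
        lintegral_mono (fun ω => NP.hitTime_sq_le β ω)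
    _ = ⨆ n, ∫⁻ ω, ((NP.TT β n ω : ℕ) : ℝ≥0∞)^2 ∂μ :=
        lintegral_iSup (fun n => (NP.meas_TTe hb).pow_const 2) hmono
    _ ≤ ENNReal.ofReal (2 * (ε ^ 3)⁻¹) := by
        refine iSup_le (fun n => ?_)
        have h1 : ∀ ω : Ω, ((NP.TT β n ω : ℕ) : ℝ≥0∞)^2 = ENNReal.ofReal ((NP.TT β n ω : ℝ)^2) := by
          intro ω
          rw [ENNReal.ofReal_pow (Nat.cast_nonneg _)]
          norm_num
        simp_rw [h1]
        rw [← ofReal_integral_eq_lintegral_ofReal (iT2 n) (ae_of_all _ (fun ω => sq_nonneg _))]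
        apply ENNReal.ofReal_le_ofReal
        calc ∫ ω, (NP.TT β n ω : ℝ)^2 ∂μ ≤ 2 / ε^3 := E6 n
          _ = 2 * (ε^3)⁻¹ := by rw [div_eq_mul_inv]
end

section
/- Let k be a positive integer and let a_0, …, a_{k−1} be integers with a_0 + a_1 + ⋯ + a_{k−1} = −1. Then there is precisely one index j ∈ {0, …, k−1} such that for all r ∈ {0, …, k−2}, the cyclic partial sum Σ_{i=0}^{r} a_{(j+i) mod k} is nonnegative. -/
/-- **Spitzer's cycle lemma** (Proposition 5 of Nachmias–Peres).  If `a_0, …, a_{k-1}` are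
integers summing to `-1`, then there is precisely one index `j ∈ {0, …, k-1}` such that all the
cyclic partial sums `∑_{i=0}^{r} a_{(j+i) mod k}`, for `r ∈ {0, …, k-2}`, are nonnegative. -/
theorem spitzer_cycle_lemma (k : ℕ) (hk : 0 < k) (a : ℕ → ℤ)
    (ha : ∑ i ∈ Finset.range k, a i = -1) :
    ∃! j : ℕ, j < k ∧ ∀ r : ℕ, r + 1 < k →
      0 ≤ ∑ i ∈ Finset.range (r + 1), a ((j + i) % k) := by
  classical
  set S : ℕ → ℤ := fun n => ∑ i ∈ Finset.range n, a (i % k) with hS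
  have hSk : ∀ n, S (n + k) = S n - 1 := by
    intro n
    induction n with
    | zero =>
      simp only [hS, zero_add, Finset.range_zero, Finset.sum_empty]
      rw [show (0:ℤ) - 1 = -1 by ring, ← ha]
      exact Finset.sum_congr rfl fun i hi => by
        rw [Nat.mod_eq_of_lt (Finset.mem_range.mp hi)]
    | succ n ih =>
      have h1 : n + 1 + k = (n + k) + 1 := by ring
      rw [h1]
      simp only [hS] at *
      rw [Finset.sum_range_succ, Finset.sum_range_succ, ih, Nat.add_mod_right]
      ring
  have hsum : ∀ j r, ∑ i ∈ Finset.range (r + 1), a ((j + i) % k) = S (j + r + 1) - S j := by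
    intro j r
    induction r with
    | zero =>
      simp [hS, Finset.sum_range_succ]
    | succ r ih =>
      rw [Finset.sum_range_succ, ih]
      have h2 : S (j + (r + 1) + 1) = S (j + r + 1) + a ((j + (r + 1)) % k) := by
        simp only [hS, show j + (r + 1) + 1 = (j + r + 1) + 1 by ring, Finset.sum_range_succ,
          show j + r + 1 = j + (r + 1) by ring]
      rw [h2]; ring
  -- no two distinct indices can both work
  have huniq : ∀ p q, p < q → q < k →
      (∀ r : ℕ, r + 1 < k → 0 ≤ ∑ i ∈ Finset.range (r + 1), a ((p + i) % k)) →
      (∀ r : ℕ, r + 1 < k → 0 ≤ ∑ i ∈ Finset.range (r + 1), a ((q + i) % k)) → False := by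
    intro p q hpq hqk hp hq
    have h1 : 0 ≤ S q - S p := by
      have := hp (q - p - 1) (by omega)
      rwa [hsum, show p + (q - p - 1) + 1 = q by omega] at this
    have h2 : 0 ≤ S (p + k) - S q := by
      have := hq (p + k - q - 1) (by omega)
      rwa [hsum, show q + (p + k - q - 1) + 1 = p + k by omega] at this
    rw [hSk] at h2
    linarith
  -- existence of a minimal index
  have hP : ∃ j, j < k ∧ ∀ i, i < k → S j ≤ S i := by
    obtain ⟨j, hj, hmin⟩ :=
      Finset.exists_min_image (Finset.range k) S ⟨0, Finset.mem_range.mpr hk⟩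
    exact ⟨j, Finset.mem_range.mp hj, fun i hi => hmin i (Finset.mem_range.mpr hi)⟩
  set j := Nat.find hP with hjdef
  obtain ⟨hjk, hjmin⟩ := Nat.find_spec hP
  have hjfirst : ∀ i, i < j → S j < S i := by
    intro i hij
    have hni := Nat.find_min hP hij
    push_neg at hni
    obtain ⟨m, hm, hlt⟩ := hni (lt_trans hij hjk)
    exact lt_of_le_of_lt (hjmin m hm) hlt
  have hgood : ∀ r : ℕ, r + 1 < k → 0 ≤ ∑ i ∈ Finset.range (r + 1), a ((j + i) % k) := by
    intro r hr
    rw [hsum]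
    rcases lt_or_ge (j + r + 1) k with h | h
    · linarith [hjmin _ h]
    · have h1 : j + r + 1 - k < j := by omega
      have h2 : j + r + 1 = (j + r + 1 - k) + k := by omega
      have h3 := hjfirst _ h1
      rw [h2, hSk]
      omega
  refine ⟨j, ⟨hjk, hgood⟩, ?_⟩
  rintro j' ⟨hj'k, hj'⟩
  by_contra hne
  rcases lt_or_gt_of_ne hne with h | h
  · exact huniq j' j h hjk hj' hgood
  · exact huniq j j' h hj'k hgood hj'
end

section
/- Let n be a positive integer and let η_1, …, η_n be any nonnegative integers. Define A_0 = 1 and, for t ∈ {1, …, n}, A_t = A_{t−1} + η_t − 1 if A_{t−1} > 0 and A_t = η_t if A_{t−1} = 0. Define Y_0 = 1 and Y_t = Y_{t−1} + η_t − 1. Then for every t ∈ {1, …, n}, A_t = Y_t − min_{0 ≤ s ≤ t−1} Y_s + 1. -/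
lemma inf'_range_one_eq (Y : ℕ → ℤ) (h : (Finset.range 1).Nonempty) :
    (Finset.range 1).inf' h Y = Y 0 := by
  apply le_antisymm
  · exact Finset.inf'_le Y (Finset.mem_range.mpr (by omega))
  · refine Finset.le_inf' h _ fun b hb => ?_
    have : b = 0 := by have := Finset.mem_range.mp hb; omega
    subst this; exact le_rfl

lemma inf'_range_succ_eq (Y : ℕ → ℤ) (t : ℕ) (h1 : (Finset.range (t+1)).Nonempty)
    (h2 : (Finset.range t).Nonempty) :
    (Finset.range (t+1)).inf' h1 Y = Y t ⊓ (Finset.range t).inf' h2 Y := by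
  apply le_antisymm
  · exact le_inf (Finset.inf'_le Y (Finset.self_mem_range_succ t))
      (Finset.le_inf' h2 _ fun b hb => Finset.inf'_le Y (Finset.mem_range.mpr (by
        have := Finset.mem_range.mp hb; omega)))
  · refine Finset.le_inf' h1 _ fun b hb => ?_
    have hb' := Finset.mem_range.mp hb
    rcases Nat.lt_succ_iff_lt_or_eq.mp hb' with h | rfl
    · exact inf_le_right.trans (Finset.inf'_le Y (Finset.mem_range.mpr h))
    · exact inf_le_left

/-- **The active-count formula** (equation (4) of Nachmias–Peres).  Given nonnegative integers
`η_1, …, η_n`, define `A_0 = 1`, `A_t = A_{t-1} + η_t - 1` if `A_{t-1} > 0` and `A_t = η_t`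
otherwise, and define `Y_0 = 1`, `Y_t = Y_{t-1} + η_t - 1`.  Then for every `t ∈ {1, …, n}`,
`A_t = Y_t - min_{0 ≤ s ≤ t-1} Y_s + 1`. -/
theorem active_eq_walk_minus_min (n : ℕ) (hn : 0 < n) (η : ℕ → ℕ) (A : ℕ → ℕ) (Y : ℕ → ℤ)
    (hA0 : A 0 = 1)
    (hA : ∀ t, 1 ≤ t → t ≤ n → A t = if 0 < A (t - 1) then A (t - 1) + η t - 1 else η t)
    (hY0 : Y 0 = 1)
    (hY : ∀ t, 1 ≤ t → t ≤ n → Y t = Y (t - 1) + η t - 1) :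
    ∀ t, ∀ ht : 1 ≤ t, t ≤ n →
      (A t : ℤ) = Y t - (Finset.range t).inf'
        (Finset.nonempty_range_iff.mpr (by omega)) Y + 1 := by
  intro t
  induction t with
  | zero => intro ht; omega
  | succ t ih =>
    intro _ htn
    have hYsucc := hY (t+1) (by omega) htn
    have hAsucc := hA (t+1) (by omega) htn
    simp only [Nat.add_sub_cancel] at hYsucc hAsucc
    rcases Nat.eq_zero_or_pos t with rfl | ht1
    · rw [inf'_range_one_eq]
      rw [hA0, if_pos (by omega)] at hAsucc
      rw [hAsucc, hYsucc, hY0]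
      push_cast
      omega
    · have hne : (Finset.range t).Nonempty := Finset.nonempty_range_iff.mpr (by omega)
      have key := ih ht1 (by omega)
      have hle : (Finset.range t).inf' (Finset.nonempty_range_iff.mpr (by omega)) Y
          ≤ Y (t-1) := Finset.inf'_le Y (Finset.mem_range.mpr (by omega))
      have hYt := hY t ht1 (by omega)
      rw [inf'_range_succ_eq Y t _ hne]
      rcases Nat.eq_zero_or_pos (A t) with h0 | hpos
      · rw [if_neg (by omega)] at hAsucc
        omega
      · rw [if_pos hpos] at hAsucc
        have hcast : (A (t+1) : ℤ) = (A t : ℤ) + η (t+1) - 1 := by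
          rw [hAsucc, Nat.cast_sub (by omega)]; push_cast; ring
        omega
end
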